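/- arXiv:1401.6243 — 2 statements merged into one kernel-verified Lean document; each statement's English description precedes it below -/
import Mathlib

section
/- Let F : ℝ → ℝ be Lipschitz and let a ≤ b be real numbers. Then there exists a constant C > 0 such that for every m ≥ 0 and every x ∈ ℝ², ∫_a^b e^{−m|x−(t,F(t))|} |x−(t,F(t))|^{−1/2} dt ≤ C (1+m)^{−1/2}. In particular (taking m = 0), sup_{x∈ℝ²} ∫_a^b |x−(t,F(t))|^{−1/2} dt < ∞. -/
open MeasureTheory Metric

noncomputable section

/-- The point `(t, F t)` of the graph of `F : ℝ → ℝ`, as a point of the Euclidean plane. -/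
def graphPt (F : ℝ → ℝ) (t : ℝ) : EuclideanSpace ℝ (Fin 2) :=
  (EuclideanSpace.equiv (Fin 2) ℝ).symm ![t, F t]

namespace SchurAux

open intervalIntegral

/-! ### Elementary facts -/

lemma sqrt_add_le (A B : ℝ) : Real.sqrt (A + B) ≤ Real.sqrt A + Real.sqrt B := by
  rcases lt_or_ge A 0 with hA | hA
  · calc Real.sqrt (A + B) ≤ Real.sqrt B := Real.sqrt_le_sqrt (by linarith)
      _ ≤ _ := by have := Real.sqrt_nonneg A; linarith
  rcases lt_or_ge B 0 with hB | hB
  · calc Real.sqrt (A + B) ≤ Real.sqrt A := Real.sqrt_le_sqrt (by linarith)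
      _ ≤ _ := by have := Real.sqrt_nonneg B; linarith
  have h1 := Real.sqrt_nonneg A
  have h2 := Real.sqrt_nonneg B
  have hA2 := Real.sq_sqrt hA
  have hB2 := Real.sq_sqrt hB
  calc Real.sqrt (A + B) ≤ Real.sqrt ((Real.sqrt A + Real.sqrt B) ^ 2) :=
        Real.sqrt_le_sqrt (by nlinarith)
    _ = _ := Real.sqrt_sq (by positivity)

/-! ### The comparison antiderivative -/

def psi (m u : ℝ) : ℝ := 4 * Real.sqrt (u / (1 + m * u))

lemma psi_zero (m : ℝ) : psi m 0 = 0 := by unfold psi; simp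

lemma psi_nonneg (m u : ℝ) : 0 ≤ psi m u := by unfold psi; positivity

lemma psi_mono {m : ℝ} (hm : 0 ≤ m) {u v : ℝ} (hu : 0 ≤ u) (huv : u ≤ v) :
    psi m u ≤ psi m v := by
  unfold psi
  have h1 : (0:ℝ) < 1 + m * u := by nlinarith
  have h2 : (0:ℝ) < 1 + m * v := by nlinarith
  gcongr 4 * Real.sqrt ?_
  rw [div_le_div_iff₀ h1 h2]
  nlinarith

lemma psi_subadd {m : ℝ} (hm : 0 ≤ m) {p d : ℝ} (hp : 0 ≤ p) (hd : 0 ≤ d) :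
    psi m (p + d) ≤ psi m p + psi m d := by
  unfold psi
  have h1 : (0:ℝ) < 1 + m * p := by nlinarith
  have h2 : (0:ℝ) < 1 + m * d := by nlinarith
  have h3 : (0:ℝ) < 1 + m * (p + d) := by nlinarith
  have key : (p + d) / (1 + m * (p + d)) ≤ p / (1 + m * p) + d / (1 + m * d) := by
    have e1 : p / (1 + m * (p + d)) ≤ p / (1 + m * p) := by
      apply div_le_div_of_nonneg_left hp h1; nlinarith
    have e2 : d / (1 + m * (p + d)) ≤ d / (1 + m * d) := by
      apply div_le_div_of_nonneg_left hd h2; nlinarith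
    calc (p + d) / (1 + m * (p + d)) = p / (1 + m * (p+d)) + d / (1 + m * (p+d)) := by ring
      _ ≤ _ := add_le_add e1 e2
  calc 4 * Real.sqrt ((p + d) / (1 + m * (p + d)))
      ≤ 4 * Real.sqrt (p / (1 + m * p) + d / (1 + m * d)) :=
        mul_le_mul_of_nonneg_left (Real.sqrt_le_sqrt key) (by norm_num)
    _ ≤ 4 * (Real.sqrt (p / (1 + m * p)) + Real.sqrt (d / (1 + m * d))) :=
        mul_le_mul_of_nonneg_left (sqrt_add_le _ _) (by norm_num)
    _ = _ := by ring

/-! ### Pointwise bound -/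

lemma expBound {w : ℝ} (hw : 0 ≤ w) :
    Real.exp (-w) ≤ 2 * (1 + w) ^ (-(3/2) : ℝ) := by
  have h1 : (0:ℝ) < 1 + w := by linarith
  have h2 : (1 + w) ^ ((3:ℝ)/2) ≤ 2 * Real.exp w := by
    calc (1 + w) ^ ((3:ℝ)/2) ≤ (1 + w) ^ ((2:ℕ):ℝ) :=
          Real.rpow_le_rpow_of_exponent_le (by linarith) (by norm_num)
      _ = (1 + w) ^ (2:ℕ) := Real.rpow_natCast _ 2
      _ ≤ 2 * Real.exp w := by
          have := Real.quadratic_le_exp_of_nonneg hw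
          nlinarith
  have h3 : (0:ℝ) < (1 + w) ^ ((3:ℝ)/2) := Real.rpow_pos_of_pos h1 _
  rw [Real.exp_neg, show -(3/2 : ℝ) = -((3:ℝ)/2) by norm_num,
    Real.rpow_neg h1.le, inv_eq_one_div, inv_eq_one_div,
    show (2:ℝ) * (1 / (1+w)^((3:ℝ)/2)) = 2 / (1+w)^((3:ℝ)/2) by ring,
    div_le_div_iff₀ (Real.exp_pos w) h3]
  linarith

lemma pointwise_bound {m u r : ℝ} (hm : 0 ≤ m) (hu : 0 < u) (hur : u ≤ r) :
    Real.exp (-m * r) * r ^ (-(1/2) : ℝ) ≤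
      2 * u ^ (-(1/2) : ℝ) * (1 + m * u) ^ (-(3/2) : ℝ) := by
  have hr : 0 < r := lt_of_lt_of_le hu hur
  have hmu : (0:ℝ) < 1 + m * u := by nlinarith
  have s1 : Real.exp (-m * r) ≤ 2 * (1 + m * r) ^ (-(3/2) : ℝ) := by
    rw [show -m * r = -(m * r) by ring]
    exact expBound (by positivity)
  have s2 : (1 + m * r) ^ (-(3/2) : ℝ) ≤ (1 + m * u) ^ (-(3/2) : ℝ) :=
    Real.rpow_le_rpow_of_nonpos hmu (by nlinarith) (by norm_num)
  have s3 : r ^ (-(1/2) : ℝ) ≤ u ^ (-(1/2) : ℝ) :=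
    Real.rpow_le_rpow_of_nonpos hu hur (by norm_num)
  calc Real.exp (-m * r) * r ^ (-(1/2) : ℝ)
      ≤ (2 * (1 + m * u) ^ (-(3/2) : ℝ)) * u ^ (-(1/2) : ℝ) := by
        apply mul_le_mul (s1.trans (by linarith)) s3 (Real.rpow_nonneg hr.le _)
        positivity
    _ = 2 * u ^ (-(1/2) : ℝ) * (1 + m * u) ^ (-(3/2) : ℝ) := by ring

/-! ### Derivative of `psi` -/

lemma psi_deriv (m : ℝ) (hm : 0 ≤ m) {s : ℝ} (hs : 0 < s) :
    HasDerivAt (psi m) (2 * s ^ (-(1/2) : ℝ) * (1 + m * s) ^ (-(3/2) : ℝ)) s := by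
  have hden : (0:ℝ) < 1 + m * s := by nlinarith
  have hd1 : HasDerivAt (fun u : ℝ => 1 + m * u) m s := by
    have h0 := ((hasDerivAt_id s).const_mul m).const_add (1:ℝ)
    rw [mul_one] at h0
    exact h0
  have hg : HasDerivAt (fun u : ℝ => u / (1 + m * u))
      ((1 * (1 + m * s) - s * m) / (1 + m * s) ^ 2) s :=
    (hasDerivAt_id s).div hd1 hden.ne'
  have hne : s / (1 + m * s) ≠ 0 := by positivity
  have h := (hg.sqrt hne).const_mul 4
  refine HasDerivAt.congr_deriv h (Eq.symm ?_)
  have ha : Real.sqrt s > 0 := Real.sqrt_pos.mpr hs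
  have hb : Real.sqrt (1 + m * s) > 0 := Real.sqrt_pos.mpr hden
  have hb2 : Real.sqrt (1 + m * s) ^ 2 = 1 + m * s := Real.sq_sqrt hden.le
  have hdiv : Real.sqrt (s / (1 + m * s)) = Real.sqrt s / Real.sqrt (1 + m * s) :=
    Real.sqrt_div hs.le _
  have e1 : s ^ (-(1/2) : ℝ) = (Real.sqrt s)⁻¹ := by
    rw [Real.rpow_neg hs.le, Real.sqrt_eq_rpow]
  have e2 : (1 + m * s) ^ (-(3/2) : ℝ) = (Real.sqrt (1 + m * s) ^ 3)⁻¹ := by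
    rw [Real.rpow_neg hden.le]
    congr 1
    rw [Real.sqrt_eq_rpow, ← Real.rpow_natCast ((1 + m*s) ^ ((1:ℝ)/2)) 3,
      ← Real.rpow_mul hden.le]
    norm_num
  rw [e1, e2, hdiv, show (1 * (1 + m * s) - s * m) = 1 by ring]
  set A := Real.sqrt s with hA
  set B := Real.sqrt (1 + m * s) with hB
  rw [← hb2]
  field_simp
  ring

/-! ### Integrability -/

lemma rpow_neg_half_of_neg {s : ℝ} (hs : s < 0) : s ^ (-(1/2) : ℝ) = 0 := by
  rw [Real.rpow_def_of_neg hs, show (-(1/2) : ℝ) * Real.pi = -(Real.pi/2) by ring,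
    Real.cos_neg, Real.cos_pi_div_two, mul_zero]

lemma absInt (p q : ℝ) :
    IntervalIntegrable (fun s : ℝ => |s| ^ (-(1/2) : ℝ)) volume p q := by
  have hfun : (fun s : ℝ => |s| ^ (-(1/2) : ℝ))
      = fun s : ℝ => s ^ (-(1/2) : ℝ) + (-s) ^ (-(1/2) : ℝ) := by
    funext s
    rcases lt_trichotomy s 0 with h | h | h
    · rw [abs_of_neg h, rpow_neg_half_of_neg h, zero_add]
    · simp [h]
    · rw [abs_of_pos h, rpow_neg_half_of_neg (by linarith : -s < 0), add_zero]
  rw [hfun]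
  refine (intervalIntegrable_rpow' (by norm_num)).add ?_
  have h := intervalIntegrable_rpow' (a := -p) (b := -q) (r := (-(1/2) : ℝ)) (by norm_num)
  have h2 := (IntervalIntegrable.iff_comp_neg (a := -p) (b := -q)
    (f := fun x : ℝ => x ^ (-(1/2) : ℝ))).mp h
  simpa only [neg_neg] using h2

lemma plainInt (m : ℝ) (hm : 0 ≤ m) (p q : ℝ) :
    IntervalIntegrable
      (fun s : ℝ => 2 * s ^ (-(1/2) : ℝ) * (1 + m * s) ^ (-(3/2) : ℝ)) volume p q := by
  apply IntervalIntegrable.mono_fun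
    ((intervalIntegrable_rpow' (a := p) (b := q) (r := (-(1/2):ℝ)) (by norm_num)).const_mul 2)
    (by fun_prop : Measurable fun s : ℝ =>
      2 * s ^ (-(1/2) : ℝ) * (1 + m * s) ^ (-(3/2) : ℝ)).aestronglyMeasurable
  filter_upwards with s
  rw [Real.norm_eq_abs, Real.norm_eq_abs]
  rcases lt_trichotomy s 0 with h | h | h
  · rw [rpow_neg_half_of_neg h, mul_zero, zero_mul, abs_zero]
  · rw [h, Real.zero_rpow (by norm_num : (-(1/2):ℝ) ≠ 0), mul_zero, zero_mul, abs_zero]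
  · have h1 : (0:ℝ) ≤ s ^ (-(1/2) : ℝ) := Real.rpow_nonneg h.le _
    have h2 : (0:ℝ) ≤ (1 + m * s) ^ (-(3/2) : ℝ) := Real.rpow_nonneg (by nlinarith) _
    have h3 : (1 + m * s) ^ (-(3/2) : ℝ) ≤ 1 :=
      Real.rpow_le_one_of_one_le_of_nonpos (by nlinarith) (by norm_num)
    rw [abs_of_nonneg (mul_nonneg (mul_nonneg (by norm_num) h1) h2),
      abs_of_nonneg (mul_nonneg (by norm_num) h1)]
    nlinarith

lemma absIntH (m : ℝ) (hm : 0 ≤ m) (p q : ℝ) :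
    IntervalIntegrable
      (fun s : ℝ => 2 * |s| ^ (-(1/2) : ℝ) * (1 + m * |s|) ^ (-(3/2) : ℝ)) volume p q := by
  apply IntervalIntegrable.mono_fun ((absInt p q).const_mul 2)
    (by fun_prop : Measurable fun s : ℝ =>
      2 * |s| ^ (-(1/2) : ℝ) * (1 + m * |s|) ^ (-(3/2) : ℝ)).aestronglyMeasurable
  filter_upwards with s
  rw [Real.norm_eq_abs, Real.norm_eq_abs]
  have h0 : (0:ℝ) ≤ 1 + m * |s| := by nlinarith [abs_nonneg s]
  have h1 : (0:ℝ) ≤ |s| ^ (-(1/2) : ℝ) := Real.rpow_nonneg (abs_nonneg s) _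
  have h2 : (0:ℝ) ≤ (1 + m * |s|) ^ (-(3/2) : ℝ) := Real.rpow_nonneg h0 _
  have h3 : (1 + m * |s|) ^ (-(3/2) : ℝ) ≤ 1 :=
    Real.rpow_le_one_of_one_le_of_nonpos (by nlinarith [abs_nonneg s]) (by norm_num)
  rw [abs_of_nonneg (mul_nonneg (mul_nonneg (by norm_num) h1) h2),
    abs_of_nonneg (mul_nonneg (by norm_num) h1)]
  nlinarith

/-! ### FTC computation and the key interval bound -/

lemma ftc (m : ℝ) (hm : 0 ≤ m) {p q : ℝ} (hp : 0 ≤ p) (hpq : p ≤ q) :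
    (∫ s in p..q, 2 * |s| ^ (-(1/2) : ℝ) * (1 + m * |s|) ^ (-(3/2) : ℝ))
      = psi m q - psi m p := by
  have hcongr : Set.EqOn
      (fun s : ℝ => 2 * |s| ^ (-(1/2) : ℝ) * (1 + m * |s|) ^ (-(3/2) : ℝ))
      (fun s : ℝ => 2 * s ^ (-(1/2) : ℝ) * (1 + m * s) ^ (-(3/2) : ℝ)) (Set.uIcc p q) := by
    intro s hs
    rw [Set.uIcc_of_le hpq] at hs
    have h0 : 0 ≤ s := le_trans hp hs.1
    simp only [abs_of_nonneg h0]
  rw [intervalIntegral.integral_congr hcongr]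
  have hcont : ContinuousOn (psi m) (Set.Icc p q) := by
    apply ContinuousOn.mul continuousOn_const
    apply Real.continuous_sqrt.comp_continuousOn
    apply ContinuousOn.div continuousOn_id
      ((continuous_const.add (continuous_const.mul continuous_id)).continuousOn)
    intro s hs
    have h0 : 0 ≤ s := le_trans hp hs.1
    have hpos : (0:ℝ) < 1 + m * s := by nlinarith
    simpa using hpos.ne'
  exact integral_eq_sub_of_hasDeriv_right_of_le hpq hcont
    (fun s hs => (psi_deriv m hm (lt_of_le_of_lt hp hs.1)).hasDerivWithinAt)
    (plainInt m hm p q)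

lemma keyPos (m : ℝ) (hm : 0 ≤ m) {p q : ℝ} (hp : 0 ≤ p) (hpq : p ≤ q) :
    (∫ s in p..q, 2 * |s| ^ (-(1/2) : ℝ) * (1 + m * |s|) ^ (-(3/2) : ℝ))
      ≤ psi m (q - p) := by
  rw [ftc m hm hp hpq]
  have h1 : psi m q ≤ psi m p + psi m (q - p) := by
    have h := psi_subadd hm hp (by linarith : (0:ℝ) ≤ q - p)
    rwa [add_sub_cancel] at h
  linarith

lemma reflect (m : ℝ) (p q : ℝ) :
    (∫ s in p..q, 2 * |s| ^ (-(1/2) : ℝ) * (1 + m * |s|) ^ (-(3/2) : ℝ))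
      = ∫ s in (-q)..(-p), 2 * |s| ^ (-(1/2) : ℝ) * (1 + m * |s|) ^ (-(3/2) : ℝ) := by
  have h := intervalIntegral.integral_comp_neg (a := -q) (b := -p)
    (f := fun s : ℝ => 2 * |s| ^ (-(1/2) : ℝ) * (1 + m * |s|) ^ (-(3/2) : ℝ))
  simp only [abs_neg, neg_neg] at h
  exact h.symm

lemma key (m : ℝ) (hm : 0 ≤ m) {p q : ℝ} (hpq : p ≤ q) :
    (∫ s in p..q, 2 * |s| ^ (-(1/2) : ℝ) * (1 + m * |s|) ^ (-(3/2) : ℝ))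
      ≤ 2 * psi m (q - p) := by
  have hψ := psi_nonneg m (q - p)
  rcases le_or_gt 0 p with hp | hp
  · have := keyPos m hm hp hpq; linarith
  rcases le_or_gt q 0 with hq | hq
  · rw [reflect]
    have := keyPos m hm (by linarith : (0:ℝ) ≤ -q) (by linarith : -q ≤ -p)
    have he : -p - -q = q - p := by ring
    rw [he] at this
    linarith
  · rw [← intervalIntegral.integral_add_adjacent_intervals
      (absIntH m hm p 0) (absIntH m hm 0 q)]
    have h1 : (∫ s in p..(0:ℝ), 2 * |s| ^ (-(1/2) : ℝ) * (1 + m * |s|) ^ (-(3/2) : ℝ))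
        ≤ psi m (q - p) := by
      rw [reflect, neg_zero]
      have := keyPos m hm (le_refl (0:ℝ)) (by linarith : (0:ℝ) ≤ -p)
      rw [sub_zero] at this
      exact this.trans (psi_mono hm (by linarith) (by linarith))
    have h2 : (∫ s in (0:ℝ)..q, 2 * |s| ^ (-(1/2) : ℝ) * (1 + m * |s|) ^ (-(3/2) : ℝ))
        ≤ psi m (q - p) := by
      have := keyPos m hm (le_refl (0:ℝ)) hq.le
      rw [sub_zero] at this
      exact this.trans (psi_mono hm (by linarith) (by linarith))
    linarith

lemma tail (m : ℝ) (hm : 0 ≤ m) {l : ℝ} (hl : 0 ≤ l) :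
    2 * psi m l ≤ 8 * Real.sqrt (max 1 l) * (1 + m) ^ (-(1/2) : ℝ) := by
  have h1m : (0:ℝ) < 1 + m := by linarith
  have hml : (0:ℝ) < 1 + m * l := by nlinarith
  have hrw : (1 + m) ^ (-(1/2) : ℝ) = (Real.sqrt (1 + m))⁻¹ := by
    rw [Real.rpow_neg h1m.le, Real.sqrt_eq_rpow]
  rw [hrw]
  have hs : (0:ℝ) < Real.sqrt (1 + m) := Real.sqrt_pos.mpr h1m
  rw [show (8:ℝ) * Real.sqrt (max 1 l) * (Real.sqrt (1+m))⁻¹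
      = 8 * Real.sqrt (max 1 l) / Real.sqrt (1+m) by ring, le_div_iff₀ hs]
  unfold psi
  rw [show 2 * (4 * Real.sqrt (l / (1 + m * l))) * Real.sqrt (1 + m)
      = 8 * (Real.sqrt (l / (1 + m * l)) * Real.sqrt (1 + m)) by ring,
    ← Real.sqrt_mul (by positivity) (1 + m)]
  have harg : l / (1 + m * l) * (1 + m) ≤ max 1 l := by
    rw [div_mul_eq_mul_div, div_le_iff₀ hml]
    rcases le_total l 1 with h | h
    · calc l * (1 + m) = l + l * m := by ring
        _ ≤ 1 + m * l := by nlinarith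
        _ ≤ max 1 l * (1 + m * l) := le_mul_of_one_le_left (by positivity) (le_max_left _ _)
    · calc l * (1 + m) = l + l * m := by ring
        _ ≤ l * (1 + m * l) := by
            nlinarith [mul_nonneg (mul_nonneg hm (by linarith : (0:ℝ) ≤ l - 1)) hl]
        _ ≤ max 1 l * (1 + m * l) := by
            apply mul_le_mul_of_nonneg_right (le_max_right _ _) hml.le
  have := Real.sqrt_le_sqrt harg
  linarith [this]

/-! ### Geometry of the graph -/

lemma meas_rpow {f : ℝ → ℝ} (hf : Measurable f) (c : ℝ) :
    Measurable fun t => f t ^ c := by fun_prop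

lemma coord_le_norm (F : ℝ → ℝ) (x : EuclideanSpace ℝ (Fin 2)) (t : ℝ) :
    |x 0 - t| ≤ ‖x - graphPt F t‖ := by
  have h0 : (x - graphPt F t) 0 = x 0 - t := by
    simp [graphPt, EuclideanSpace.equiv]
  rw [EuclideanSpace.norm_eq]
  calc |x 0 - t| = Real.sqrt (‖(x - graphPt F t) 0‖^2) := by
        rw [h0]; rw [Real.sqrt_sq_eq_abs]; simp [abs_abs]
    _ ≤ _ := by
        apply Real.sqrt_le_sqrt
        exact Finset.single_le_sum (f := fun i => ‖(x - graphPt F t) i‖^2)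
          (fun i _ => sq_nonneg _) (Finset.mem_univ 0)

lemma cont_norm (F : ℝ → ℝ) (hF : Continuous F) (x : EuclideanSpace ℝ (Fin 2)) :
    Continuous fun t => ‖x - graphPt F t‖ := by
  apply Continuous.norm
  apply Continuous.sub continuous_const
  unfold graphPt
  exact Continuous.comp (EuclideanSpace.equiv (Fin 2) ℝ).symm.continuous
    (by
      apply continuous_pi; intro i; fin_cases i
      · simpa using continuous_id'
      · simpa using hF)

end SchurAux

open SchurAux intervalIntegral

/-- Schur-test integral bounds of Section 3.
If `F : ℝ → ℝ` is Lipschitz and `a ≤ b`, then there is `C > 0` such that for all `m ≥ 0`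
and all `x ∈ ℝ²`, `∫_a^b e^{−m|x−(t,F(t))|} |x−(t,F(t))|^{−1/2} dt ≤ C (1+m)^{−1/2}`;
in particular the `m = 0` integral is bounded uniformly in `x`. -/
theorem schur_integral_bound_graph
    (F : ℝ → ℝ) (hF : ∃ L : NNReal, LipschitzWith L F) (a b : ℝ) (hab : a ≤ b) :
    ∃ C > 0,
      (∀ m : ℝ, 0 ≤ m → ∀ x : EuclideanSpace ℝ (Fin 2),
        (∫ t in a..b,
            Real.exp (-m * ‖x - graphPt F t‖) * ‖x - graphPt F t‖ ^ (-(1/2 : ℝ))) ≤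
          C * (1 + m) ^ (-(1/2 : ℝ))) ∧
      (∀ x : EuclideanSpace ℝ (Fin 2),
        (∫ t in a..b, ‖x - graphPt F t‖ ^ (-(1/2 : ℝ))) ≤ C) := by
  obtain ⟨L, hL⟩ := hF
  have hFc : Continuous F := hL.continuous
  have hCpos : (0:ℝ) < 8 * Real.sqrt (max 1 (b - a)) :=
    mul_pos (by norm_num) (Real.sqrt_pos.mpr (lt_max_of_lt_left one_pos))
  have hmain : ∀ m : ℝ, 0 ≤ m → ∀ x : EuclideanSpace ℝ (Fin 2),
      (∫ t in a..b,
          Real.exp (-m * ‖x - graphPt F t‖) * ‖x - graphPt F t‖ ^ (-(1/2 : ℝ))) ≤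
        (8 * Real.sqrt (max 1 (b - a))) * (1 + m) ^ (-(1/2 : ℝ)) := by
    intro m hm x
    set c : ℝ := x 0 with hc
    have hν : Continuous fun t : ℝ => ‖x - graphPt F t‖ := cont_norm F hFc x
    have hνm : Measurable fun t : ℝ => ‖x - graphPt F t‖ := hν.measurable
    have hmeas : Measurable fun t : ℝ =>
        Real.exp (-m * ‖x - graphPt F t‖) * ‖x - graphPt F t‖ ^ (-(1/2 : ℝ)) :=
      ((Real.continuous_exp.comp (continuous_const.mul hν)).measurable).mul
        (meas_rpow hνm _)
    have hae : ∀ᵐ t : ℝ, t ≠ c := by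
      rw [MeasureTheory.ae_iff]
      simpa [Set.setOf_eq_eq_singleton, not_not] using Real.volume_singleton (a := c)
    have hptw : ∀ t : ℝ, t ≠ c →
        Real.exp (-m * ‖x - graphPt F t‖) * ‖x - graphPt F t‖ ^ (-(1/2 : ℝ)) ≤
          2 * |t - c| ^ (-(1/2) : ℝ) * (1 + m * |t - c|) ^ (-(3/2) : ℝ) := by
      intro t ht
      have hu : 0 < |t - c| := abs_pos.mpr (sub_ne_zero.mpr ht)
      have hur : |t - c| ≤ ‖x - graphPt F t‖ := by
        rw [abs_sub_comm]
        exact coord_le_norm F x t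
      exact pointwise_bound hm hu hur
    have hgi : IntervalIntegrable
        (fun t : ℝ => 2 * |t - c| ^ (-(1/2) : ℝ) * (1 + m * |t - c|) ^ (-(3/2) : ℝ))
        volume a b := by
      have h := (absIntH m hm (a - c) (b - c)).comp_sub_right c
      simpa using h
    have hfi : IntervalIntegrable
        (fun t : ℝ => Real.exp (-m * ‖x - graphPt F t‖) * ‖x - graphPt F t‖ ^ (-(1/2 : ℝ)))
        volume a b := by
      apply hgi.mono_fun' hmeas.aestronglyMeasurable
      apply Filter.Eventually.filter_mono (MeasureTheory.ae_mono Measure.restrict_le_self)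
      filter_upwards [hae] with t ht
      rw [Real.norm_eq_abs, abs_of_nonneg (by positivity)]
      exact hptw t ht
    calc (∫ t in a..b,
            Real.exp (-m * ‖x - graphPt F t‖) * ‖x - graphPt F t‖ ^ (-(1/2 : ℝ)))
        ≤ ∫ t in a..b, 2 * |t - c| ^ (-(1/2) : ℝ) * (1 + m * |t - c|) ^ (-(3/2) : ℝ) :=
          integral_mono_ae hab hfi hgi (by filter_upwards [hae] with t ht; exact hptw t ht)
      _ = ∫ s in (a - c)..(b - c),
            2 * |s| ^ (-(1/2) : ℝ) * (1 + m * |s|) ^ (-(3/2) : ℝ) :=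
          integral_comp_sub_right
            (fun s : ℝ => 2 * |s| ^ (-(1/2) : ℝ) * (1 + m * |s|) ^ (-(3/2) : ℝ)) c
      _ ≤ 2 * psi m (b - c - (a - c)) := key m hm (by linarith)
      _ = 2 * psi m (b - a) := by rw [show b - c - (a - c) = b - a by ring]
      _ ≤ (8 * Real.sqrt (max 1 (b - a))) * (1 + m) ^ (-(1/2 : ℝ)) :=
          tail m hm (by linarith)
  refine ⟨8 * Real.sqrt (max 1 (b - a)), hCpos, hmain, ?_⟩
  intro x
  have h := hmain 0 le_rfl x
  simp only [neg_zero, zero_mul, Real.exp_zero, one_mul, add_zero, Real.one_rpow,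
    mul_one] at h
  exact h

end
end

section
/- For every α ∈ (0,1) there exists a constant C_α such that for every real λ ≥ 2, ∫_{{r ≥ 0 : |r − λ| ≥ 1}} (2+r²)^{α/2} |r² − λ²|^{−1} dr ≤ C_α λ^{α−1} log λ. (This is the calculus estimate used in the reduction lemma of Section 4 to bound the contribution to Q_λ from frequencies ξ with ||ξ| − |λ|| ≥ 1.) -/
open MeasureTheory

noncomputable section

set_option maxHeartbeats 1600000 in
/-- calculus estimate of the reduction lemma of Section 4:
for `α ∈ (0,1)` and real `λ ≥ 2`,
`∫_{r ≥ 0, |r−λ| ≥ 1} (2+r²)^{α/2} |r²−λ²|^{−1} dr ≤ C_α λ^{α−1} log λ`. -/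
theorem offband_frequency_integral_bound
    (α : ℝ) (hα : α ∈ Set.Ioo (0 : ℝ) 1) :
    ∃ C > 0, ∀ lam : ℝ, 2 ≤ lam →
      (∫ r in {r : ℝ | 0 ≤ r ∧ 1 ≤ |r - lam|},
          (2 + r ^ 2) ^ (α / 2) * |r ^ 2 - lam ^ 2|⁻¹) ≤
        C * lam ^ (α - 1) * Real.log lam := by
  obtain ⟨hα0, hα1⟩ := hα
  have h1α : (0:ℝ) < 1 - α := by linarith
  refine ⟨5 + 8 / (1 - α), by positivity, ?_⟩
  intro lam hlam
  set f : ℝ → ℝ := fun r => (2 + r ^ 2) ^ (α / 2) * |r ^ 2 - lam ^ 2|⁻¹ with hf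
  have hlpos : (0:ℝ) < lam := by linarith
  have hX : (0:ℝ) < lam ^ (α - 1) := Real.rpow_pos_of_pos hlpos _
  have hL : Real.log 2 ≤ Real.log lam := Real.log_le_log (by norm_num) hlam
  have hL2 : (1:ℝ)/2 < Real.log lam := by
    have := Real.log_two_gt_d9
    linarith
  -- decompose the domain
  have hset : {r : ℝ | 0 ≤ r ∧ 1 ≤ |r - lam|}
      = Set.Icc 0 (lam-1) ∪ (Set.Icc (lam+1) (2*lam) ∪ Set.Ioi (2*lam)) := by
    rw [Set.Icc_union_Ioi_eq_Ici (by linarith)]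
    ext r
    simp only [Set.mem_setOf_eq, Set.mem_union, Set.mem_Icc, Set.mem_Ici]
    constructor
    · rintro ⟨h0, h1⟩
      rcases le_abs.mp h1 with h | h
      · right; linarith
      · left; exact ⟨h0, by linarith⟩
    · rintro (⟨h0, h1⟩ | h)
      · exact ⟨h0, le_abs.mpr (Or.inr (by linarith))⟩
      · exact ⟨by linarith, le_abs.mpr (Or.inl (by linarith))⟩
  -- measurability and continuity
  have hmeas : Measurable f :=
    (((continuous_const.add (continuous_pow 2)).rpow_const
        (fun x => Or.inl (by positivity : (2:ℝ) + x ^ 2 ≠ 0))).measurable).mul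
      (((continuous_pow 2).sub continuous_const).abs.measurable.inv)
  have hcont : ∀ s : Set ℝ, (∀ r ∈ s, r ^ 2 ≠ lam ^ 2) → ContinuousOn f s := by
    intro s hs
    apply ContinuousOn.mul
    · exact ((continuous_const.add (continuous_pow 2)).rpow_const
        (fun x => Or.inl (by positivity : (2:ℝ) + x ^ 2 ≠ 0))).continuousOn
    · exact ContinuousOn.inv₀
        (((continuous_pow 2).sub continuous_const).abs.continuousOn)
        (fun r hr => abs_ne_zero.mpr (sub_ne_zero.mpr (hs r hr)))
  -- pointwise bound, piece 1
  have hb1 : ∀ r ∈ Set.Icc (0:ℝ) (lam-1),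
      f r ≤ 2 * lam ^ (α-1) * (lam - r)⁻¹ := by
    rintro r ⟨hr0, hr1⟩
    have habs : |r ^ 2 - lam ^ 2| = (lam - r) * (lam + r) := by
      rw [abs_of_nonpos (by nlinarith)]; ring
    have hA : (2 + r ^ 2) ^ (α / 2) ≤ 2 * lam ^ α := by
      calc (2 + r ^ 2) ^ (α / 2) ≤ ((2*lam) ^ (2:ℝ)) ^ (α / 2) := by
            apply Real.rpow_le_rpow (by positivity) _ (by positivity)
            rw [Real.rpow_two]; nlinarith
        _ = (2*lam) ^ α := by
            rw [← Real.rpow_mul (by positivity), show (2:ℝ) * (α/2) = α by ring]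
        _ = 2 ^ α * lam ^ α := Real.mul_rpow (by norm_num) (by positivity)
        _ ≤ 2 * lam ^ α := by
            have h2 : (2:ℝ) ^ α ≤ 2 ^ (1:ℝ) :=
              Real.rpow_le_rpow_of_exponent_le one_le_two hα1.le
            rw [Real.rpow_one] at h2
            exact mul_le_mul_of_nonneg_right h2 (by positivity)
    have hB : lam * (lam - r) ≤ |r ^ 2 - lam ^ 2| := by rw [habs]; nlinarith
    calc f r = (2 + r ^ 2) ^ (α / 2) / |r ^ 2 - lam ^ 2| := (div_eq_mul_inv _ _).symm
      _ ≤ (2 * lam ^ α) / (lam * (lam - r)) :=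
          div_le_div₀ (by positivity) hA (by nlinarith) hB
      _ = 2 * lam ^ (α-1) * (lam - r)⁻¹ := by
          rw [Real.rpow_sub hlpos, Real.rpow_one]
          field_simp
  -- pointwise bound, piece 2
  have hb2 : ∀ r ∈ Set.Icc (lam+1) (2*lam),
      f r ≤ 3 * lam ^ (α-1) * (r - lam)⁻¹ := by
    rintro r ⟨hr0, hr1⟩
    have habs : |r ^ 2 - lam ^ 2| = (r - lam) * (r + lam) := by
      rw [abs_of_nonneg (by nlinarith)]; ring
    have hA : (2 + r ^ 2) ^ (α / 2) ≤ 3 * lam ^ α := by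
      calc (2 + r ^ 2) ^ (α / 2) ≤ ((3*lam) ^ (2:ℝ)) ^ (α / 2) := by
            apply Real.rpow_le_rpow (by positivity) _ (by positivity)
            rw [Real.rpow_two]; nlinarith
        _ = (3*lam) ^ α := by
            rw [← Real.rpow_mul (by positivity), show (2:ℝ) * (α/2) = α by ring]
        _ = 3 ^ α * lam ^ α := Real.mul_rpow (by norm_num) (by positivity)
        _ ≤ 3 * lam ^ α := by
            have h2 : (3:ℝ) ^ α ≤ 3 ^ (1:ℝ) :=
              Real.rpow_le_rpow_of_exponent_le (by norm_num) hα1.le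
            rw [Real.rpow_one] at h2
            exact mul_le_mul_of_nonneg_right h2 (by positivity)
    have hB : lam * (r - lam) ≤ |r ^ 2 - lam ^ 2| := by rw [habs]; nlinarith
    calc f r = (2 + r ^ 2) ^ (α / 2) / |r ^ 2 - lam ^ 2| := (div_eq_mul_inv _ _).symm
      _ ≤ (3 * lam ^ α) / (lam * (r - lam)) :=
          div_le_div₀ (by positivity) hA (by nlinarith) hB
      _ = 3 * lam ^ (α-1) * (r - lam)⁻¹ := by
          rw [Real.rpow_sub hlpos, Real.rpow_one]
          field_simp
  -- pointwise bound, piece 3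
  have hb3 : ∀ r ∈ Set.Ioi (2*lam), f r ≤ 4 * r ^ (α-2) := by
    intro r hr
    simp only [Set.mem_Ioi] at hr
    have hr4 : (4:ℝ) ≤ r := by linarith
    have habs : |r ^ 2 - lam ^ 2| = r ^ 2 - lam ^ 2 := abs_of_nonneg (by nlinarith)
    have hA : (2 + r ^ 2) ^ (α / 2) ≤ 2 * r ^ α := by
      calc (2 + r ^ 2) ^ (α / 2) ≤ ((2*r) ^ (2:ℝ)) ^ (α / 2) := by
            apply Real.rpow_le_rpow (by positivity) _ (by positivity)
            rw [Real.rpow_two]; nlinarith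
        _ = (2*r) ^ α := by
            rw [← Real.rpow_mul (by positivity), show (2:ℝ) * (α/2) = α by ring]
        _ = 2 ^ α * r ^ α := Real.mul_rpow (by norm_num) (by positivity)
        _ ≤ 2 * r ^ α := by
            have h2 : (2:ℝ) ^ α ≤ 2 ^ (1:ℝ) :=
              Real.rpow_le_rpow_of_exponent_le one_le_two hα1.le
            rw [Real.rpow_one] at h2
            exact mul_le_mul_of_nonneg_right h2 (by positivity)
    have hB : r ^ 2 / 2 ≤ |r ^ 2 - lam ^ 2| := by rw [habs]; nlinarith
    calc f r = (2 + r ^ 2) ^ (α / 2) / |r ^ 2 - lam ^ 2| := (div_eq_mul_inv _ _).symm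
      _ ≤ (2 * r ^ α) / (r ^ 2 / 2) :=
          div_le_div₀ (by positivity) hA (by positivity) hB
      _ = 4 * r ^ (α-2) := by
          rw [show α - 2 = α - (2:ℕ) by norm_num, Real.rpow_sub (by linarith),
            Real.rpow_natCast]
          field_simp
          ring
  -- integrability of f on the pieces
  have hint1 : IntegrableOn f (Set.Icc 0 (lam-1)) := by
    apply (hcont _ ?_).integrableOn_Icc
    rintro r ⟨hr0, hr1⟩
    nlinarith
  have hint2 : IntegrableOn f (Set.Icc (lam+1) (2*lam)) := by
    apply (hcont _ ?_).integrableOn_Icc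
    rintro r ⟨hr0, hr1⟩
    nlinarith
  have hg3 : IntegrableOn (fun r : ℝ => 4 * r ^ (α-2)) (Set.Ioi (2*lam)) :=
    (integrableOn_Ioi_rpow_of_lt (by linarith) (by linarith)).const_mul 4
  have hint3 : IntegrableOn f (Set.Ioi (2*lam)) := by
    apply Integrable.mono' hg3 (hmeas.aestronglyMeasurable.restrict)
    filter_upwards [ae_restrict_mem measurableSet_Ioi] with r hr
    rw [Real.norm_of_nonneg (by positivity)]
    exact hb3 r hr
  -- integrability of the bounding functions on the Icc pieces
  have hg1 : IntegrableOn (fun r : ℝ => 2 * lam ^ (α-1) * (lam - r)⁻¹)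
      (Set.Icc 0 (lam-1)) := by
    apply ContinuousOn.integrableOn_Icc
    apply continuousOn_const.mul
    apply ContinuousOn.inv₀ (continuous_const.sub continuous_id).continuousOn
    rintro r ⟨hr0, hr1⟩
    intro h; have h' : lam - r = 0 := h; linarith
  have hg2 : IntegrableOn (fun r : ℝ => 3 * lam ^ (α-1) * (r - lam)⁻¹)
      (Set.Icc (lam+1) (2*lam)) := by
    apply ContinuousOn.integrableOn_Icc
    apply continuousOn_const.mul
    apply ContinuousOn.inv₀ (continuous_id.sub continuous_const).continuousOn
    rintro r ⟨hr0, hr1⟩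
    intro h; have h' : r - lam = 0 := h; linarith
  -- split the integral
  have hdisj2 : Disjoint (Set.Icc (lam+1) (2*lam)) (Set.Ioi (2*lam)) :=
    Set.disjoint_left.mpr (fun r hr hr' => absurd hr.2 (not_le.mpr hr'))
  have hdisj1 : Disjoint (Set.Icc (0:ℝ) (lam-1))
      (Set.Icc (lam+1) (2*lam) ∪ Set.Ioi (2*lam)) := by
    apply Set.disjoint_left.mpr
    rintro r ⟨hr0, hr1⟩ (⟨h2, h3⟩ | h4)
    · linarith
    · simp only [Set.mem_Ioi] at h4; linarith
  have hsplit : (∫ r in {r : ℝ | 0 ≤ r ∧ 1 ≤ |r - lam|}, f r)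
      = (∫ r in Set.Icc 0 (lam-1), f r) + ((∫ r in Set.Icc (lam+1) (2*lam), f r)
        + (∫ r in Set.Ioi (2*lam), f r)) := by
    rw [hset, setIntegral_union hdisj1 (measurableSet_Icc.union measurableSet_Ioi)
      hint1 (hint2.union hint3),
      setIntegral_union hdisj2 measurableSet_Ioi hint2 hint3]
  -- bound each piece
  have hI1 : (∫ r in Set.Icc (0:ℝ) (lam-1), f r)
      ≤ 2 * lam ^ (α-1) * Real.log lam := by
    calc (∫ r in Set.Icc (0:ℝ) (lam-1), f r)
        ≤ ∫ r in Set.Icc (0:ℝ) (lam-1), 2 * lam ^ (α-1) * (lam - r)⁻¹ :=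
          setIntegral_mono_on hint1 hg1 measurableSet_Icc hb1
      _ = 2 * lam ^ (α-1) * Real.log lam := by
          rw [MeasureTheory.integral_Icc_eq_integral_Ioc,
            ← intervalIntegral.integral_of_le (by linarith),
            intervalIntegral.integral_const_mul]
          congr 1
          rw [intervalIntegral.integral_comp_sub_left (fun x => x⁻¹) lam]
          have h0 : (0:ℝ) ∉ Set.uIcc (lam - (lam-1)) (lam - 0) := by
            rw [Set.uIcc_of_le (by linarith)]
            rintro ⟨h1', h2'⟩; linarith
          rw [integral_inv h0]
          norm_num
  have hI2 : (∫ r in Set.Icc (lam+1) (2*lam), f r)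
      ≤ 3 * lam ^ (α-1) * Real.log lam := by
    calc (∫ r in Set.Icc (lam+1) (2*lam), f r)
        ≤ ∫ r in Set.Icc (lam+1) (2*lam), 3 * lam ^ (α-1) * (r - lam)⁻¹ :=
          setIntegral_mono_on hint2 hg2 measurableSet_Icc hb2
      _ = 3 * lam ^ (α-1) * Real.log lam := by
          rw [MeasureTheory.integral_Icc_eq_integral_Ioc,
            ← intervalIntegral.integral_of_le (by linarith),
            intervalIntegral.integral_const_mul]
          congr 1
          rw [intervalIntegral.integral_comp_sub_right (fun x => x⁻¹) lam]
          have h0 : (0:ℝ) ∉ Set.uIcc (lam + 1 - lam) (2*lam - lam) := by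
            rw [Set.uIcc_of_le (by linarith)]
            rintro ⟨h1', h2'⟩; linarith
          rw [integral_inv h0]
          rw [show lam + 1 - lam = 1 by ring, show 2*lam - lam = lam by ring]
          norm_num
  have hI3 : (∫ r in Set.Ioi (2*lam), f r)
      ≤ 8 / (1-α) * lam ^ (α-1) * Real.log lam := by
    have hI3' : (∫ r in Set.Ioi (2*lam), f r)
        ≤ ∫ r in Set.Ioi (2*lam), 4 * r ^ (α-2) :=
      setIntegral_mono_on hint3 hg3 measurableSet_Ioi hb3
    have hval : (∫ r in Set.Ioi (2*lam), 4 * r ^ (α-2))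
        = 4 * ((2*lam) ^ (α-1) / (1-α)) := by
      rw [integral_const_mul, integral_Ioi_rpow_of_lt (by linarith) (by linarith),
        show α - 2 + 1 = α - 1 by ring]
      have h1 : α - 1 ≠ 0 := by intro h; rw [sub_eq_zero] at h; linarith
      have h2 : (1:ℝ) - α ≠ 0 := by intro h; linarith [sub_eq_zero.mp h]
      field_simp
      ring
    have hle : (2*lam) ^ (α-1) ≤ lam ^ (α-1) := by
      rw [Real.mul_rpow (by norm_num) hlpos.le]
      have h2 : (2:ℝ) ^ (α-1) ≤ 1 :=
        Real.rpow_le_one_of_one_le_of_nonpos one_le_two (by linarith)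
      nlinarith [Real.rpow_nonneg hlpos.le (α-1)]
    have hYnn : (0:ℝ) ≤ (2*lam) ^ (α-1) := Real.rpow_nonneg (by linarith) _
    calc (∫ r in Set.Ioi (2*lam), f r) ≤ 4 * ((2*lam) ^ (α-1) / (1-α)) := by
          rw [← hval]; exact hI3'
      _ = (4 * (2*lam) ^ (α-1)) / (1-α) := by ring
      _ ≤ (8 * lam ^ (α-1) * Real.log lam) / (1-α) := by
          gcongr ?_ / _
          nlinarith [mul_nonneg hX.le (by linarith : (0:ℝ) ≤ 2 * Real.log lam - 1)]
      _ = 8 / (1-α) * lam ^ (α-1) * Real.log lam := by ring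
  calc (∫ r in {r : ℝ | 0 ≤ r ∧ 1 ≤ |r - lam|}, f r)
      ≤ 2 * lam ^ (α-1) * Real.log lam + (3 * lam ^ (α-1) * Real.log lam
        + 8 / (1-α) * lam ^ (α-1) * Real.log lam) := by
        rw [hsplit]; gcongr
    _ = (5 + 8 / (1-α)) * lam ^ (α-1) * Real.log lam := by ring

end
end
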